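/- There is an absolute constant C such that |(∇_x K)(x,t)| ≤ C(t^{−3/2} e^{−|x|²/(16t)} + ∫_t^∞ s^{−5/2} e^{−|x|²/(16s)} ds) for all x ∈ ℝ² \ {0}, t > 0, where K(x,t) = G(x,t)𝕀 + ∫_t^∞ ∇²G(x,s) ds. -/

import Mathlib

open Real Set MeasureTheory

noncomputable def pd (i : Fin 2) (f : (Fin 2 → ℝ) → ℝ) (x : Fin 2 → ℝ) : ℝ :=
  fderiv ℝ f x (Pi.single i 1)

def nsq (x : Fin 2 → ℝ) : ℝ := x 0 ^ 2 + x 1 ^ 2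

noncomputable def heatG (x : Fin 2 → ℝ) (t : ℝ) : ℝ :=
  1 / (4 * π * t) * Real.exp (-(nsq x) / (4 * t))

/-- Entries of `K(x,t) = G(x,t)𝕀 + ∫_t^∞ ∇²G(x,s) ds`. -/
noncomputable def Kent (i j : Fin 2) (x : Fin 2 → ℝ) (t : ℝ) : ℝ :=
  (if i = j then 1 else 0) * heatG x t
    + ∫ s in Set.Ioi t, pd i (fun z => pd j (fun w => heatG w s) z) x

/-- `|∇ₓK(x,t)|`: sum of absolute values of all first `x`-derivatives of the entries. -/
noncomputable def gradK (x : Fin 2 → ℝ) (t : ℝ) : ℝ :=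
  ∑ i : Fin 2, ∑ j : Fin 2, ∑ k : Fin 2, |pd k (fun z => Kent i j z t) x|

noncomputable def Lm (a : Fin 2 → ℝ) : (Fin 2 → ℝ) →L[ℝ] ℝ :=
  a 0 • ContinuousLinearMap.proj 0 + a 1 • ContinuousLinearMap.proj 1

@[simp] lemma Lm_apply (a v : Fin 2 → ℝ) : Lm a v = a 0 * v 0 + a 1 * v 1 := by
  simp [Lm, smul_eq_mul]

lemma Lm_single (a : Fin 2 → ℝ) (k : Fin 2) : Lm a (Pi.single k 1) = a k := by
  fin_cases k <;> simp

lemma Lm_norm_le (a : Fin 2 → ℝ) : ‖Lm a‖ ≤ |a 0| + |a 1| := by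
  refine ContinuousLinearMap.opNorm_le_bound _ (by positivity) fun v => ?_
  rw [Lm_apply]
  calc ‖a 0 * v 0 + a 1 * v 1‖ ≤ ‖a 0 * v 0‖ + ‖a 1 * v 1‖ := norm_add_le _ _
    _ ≤ |a 0| * ‖v‖ + |a 1| * ‖v‖ := by
        gcongr
        · exact (norm_mul _ _).le.trans (by rw [Real.norm_eq_abs]; gcongr; exact norm_le_pi_norm v 0)
        · exact (norm_mul _ _).le.trans (by rw [Real.norm_eq_abs]; gcongr; exact norm_le_pi_norm v 1)
    _ = (|a 0| + |a 1|) * ‖v‖ := by ring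

lemma pd_eq {f : (Fin 2 → ℝ) → ℝ} {x : Fin 2 → ℝ} {L : (Fin 2 → ℝ) →L[ℝ] ℝ} (k : Fin 2)
    (h : HasFDerivAt f L x) : pd k f x = L (Pi.single k 1) := by
  rw [pd, h.fderiv]

lemma hasF_nsq_exp (s : ℝ) (x : Fin 2 → ℝ) :
    HasFDerivAt (fun w => Real.exp (-(nsq w) / (4 * s)))
      (Lm (fun k => -(x k) / (2 * s) * Real.exp (-(nsq x) / (4 * s)))) x := by
  have h0 : HasFDerivAt (fun w : Fin 2 → ℝ => w 0) (ContinuousLinearMap.proj 0 : (Fin 2 → ℝ) →L[ℝ] ℝ) x :=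
    hasFDerivAt_apply (𝕜 := ℝ) (F' := fun _ : Fin 2 => ℝ) 0 x
  have h1 : HasFDerivAt (fun w : Fin 2 → ℝ => w 1) (ContinuousLinearMap.proj 1 : (Fin 2 → ℝ) →L[ℝ] ℝ) x :=
    hasFDerivAt_apply (𝕜 := ℝ) (F' := fun _ : Fin 2 => ℝ) 1 x
  have hn : HasFDerivAt (fun w => -(nsq w) / (4 * s))
      (Lm (fun k => -(x k) / (2 * s))) x := by
    have := (((h0.mul h0).add (h1.mul h1)).neg).const_mul ((4 * s)⁻¹)
    have h2 : (fun w : Fin 2 → ℝ => -(nsq w) / (4 * s))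
        = fun w => (4 * s)⁻¹ * -(w 0 * w 0 + w 1 * w 1) := by
      funext w; rw [nsq]; ring
    rw [h2]
    refine this.congr_fderiv ?_
    ext v
    simp [Lm, smul_eq_mul]
    ring
  have := hn.exp
  refine this.congr_fderiv ?_
  ext v
  simp [Lm, smul_eq_mul]
  ring

lemma hasF_mulE {q : (Fin 2 → ℝ) → ℝ} {a : Fin 2 → ℝ} {x : Fin 2 → ℝ} (s : ℝ)
    (hq : HasFDerivAt q (Lm a) x) :
    HasFDerivAt (fun w => q w * Real.exp (-(nsq w) / (4 * s)))
      (Lm (fun k => (a k - q x * (x k) / (2 * s)) * Real.exp (-(nsq x) / (4 * s)))) x := by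
  have := hq.mul (hasF_nsq_exp s x)
  refine this.congr_fderiv ?_
  ext v
  simp [Lm, smul_eq_mul]
  ring

/-- Level-1 spatial coefficient of ∇G. -/
noncomputable def P1 (j : Fin 2) (x : Fin 2 → ℝ) (s : ℝ) : ℝ :=
  -(1 / (4 * π * s)) * x j / (2 * s)

/-- Level-2 coefficient (second derivatives of G). -/
noncomputable def P2 (i j : Fin 2) (x : Fin 2 → ℝ) (s : ℝ) : ℝ :=
  1 / (4 * π * s) * (x i * x j / (4 * s ^ 2) - (if i = j then 1 else 0) / (2 * s))

/-- Level-3 coefficient (third derivatives of G). -/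
noncomputable def P3 (k i j : Fin 2) (x : Fin 2 → ℝ) (s : ℝ) : ℝ :=
  1 / (4 * π * s) * (((if i = k then x j else 0) + (if j = k then x i else 0)) / (4 * s ^ 2))
    - P2 i j x s * x k / (2 * s)

lemma hasF_heatG (s : ℝ) (x : Fin 2 → ℝ) :
    HasFDerivAt (fun w => heatG w s)
      (Lm (fun k => P1 k x s * Real.exp (-(nsq x) / (4 * s)))) x := by
  have hc : HasFDerivAt (fun _ : Fin 2 → ℝ => 1 / (4 * π * s)) (Lm fun _ => 0) x := by
    have := hasFDerivAt_const (𝕜 := ℝ) (E := Fin 2 → ℝ) (1 / (4 * π * s)) x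
    convert this using 1
    ext v; simp
  have := hasF_mulE s hc
  have h2 : (fun k : Fin 2 => (0 - 1 / (4 * π * s) * x k / (2 * s)) * Real.exp (-(nsq x) / (4 * s)))
      = fun k => P1 k x s * Real.exp (-(nsq x) / (4 * s)) := by
    funext k; rw [P1]; ring
  rw [← h2]
  exact this

lemma pd_heatG (j : Fin 2) (s : ℝ) (x : Fin 2 → ℝ) :
    pd j (fun w => heatG w s) x = P1 j x s * Real.exp (-(nsq x) / (4 * s)) := by
  rw [pd_eq j (hasF_heatG s x), Lm_single]

lemma hasF_P1E (j : Fin 2) (s : ℝ) (x : Fin 2 → ℝ) :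
    HasFDerivAt (fun w => P1 j w s * Real.exp (-(nsq w) / (4 * s)))
      (Lm (fun k => P2 k j x s * Real.exp (-(nsq x) / (4 * s)))) x := by
  have hq : HasFDerivAt (fun w : Fin 2 → ℝ => P1 j w s)
      (Lm (fun k => if j = k then -(1 / (4 * π * s)) / (2 * s) else 0)) x := by
    have h0 := hasFDerivAt_apply (𝕜 := ℝ) (F' := fun _ : Fin 2 => ℝ) j x
    have := h0.const_mul (-(1 / (4 * π * s)) / (2 * s))
    have h2 : (fun w : Fin 2 → ℝ => P1 j w s)
        = fun w => -(1 / (4 * π * s)) / (2 * s) * w j := by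
      funext w; rw [P1]; ring
    rw [h2]
    refine this.congr_fderiv ?_
    ext v
    fin_cases j <;> simp [Lm, smul_eq_mul]
  have := hasF_mulE s hq
  have h2 : (fun k : Fin 2 => ((if j = k then -(1 / (4 * π * s)) / (2 * s) else 0)
        - P1 j x s * x k / (2 * s)) * Real.exp (-(nsq x) / (4 * s)))
      = fun k => P2 k j x s * Real.exp (-(nsq x) / (4 * s)) := by
    funext k
    rcases eq_or_ne j k with h | h
    · subst h; simp [P1, P2]; ring
    · simp [P1, P2, if_neg h, if_neg (Ne.symm h)]; ring
  rw [← h2]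
  exact this

lemma pd2_heatG (i j : Fin 2) (s : ℝ) (x : Fin 2 → ℝ) :
    pd i (fun z => pd j (fun w => heatG w s) z) x
      = P2 i j x s * Real.exp (-(nsq x) / (4 * s)) := by
  have h : (fun z => pd j (fun w => heatG w s) z)
      = fun z => P1 j z s * Real.exp (-(nsq z) / (4 * s)) := funext fun z => pd_heatG j s z
  rw [h, pd_eq i (hasF_P1E j s x), Lm_single]

lemma hasF_P2E (i j : Fin 2) (s : ℝ) (x : Fin 2 → ℝ) :
    HasFDerivAt (fun w => P2 i j w s * Real.exp (-(nsq w) / (4 * s)))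
      (Lm (fun k => P3 k i j x s * Real.exp (-(nsq x) / (4 * s)))) x := by
  have hq : HasFDerivAt (fun w : Fin 2 → ℝ => P2 i j w s)
      (Lm (fun k => 1 / (4 * π * s) * (((if i = k then x j else 0)
        + (if j = k then x i else 0)) / (4 * s ^ 2)))) x := by
    have h0 := hasFDerivAt_apply (𝕜 := ℝ) (F' := fun _ : Fin 2 => ℝ) i x
    have h1 := hasFDerivAt_apply (𝕜 := ℝ) (F' := fun _ : Fin 2 => ℝ) j x
    have hmul := (h0.mul h1).const_mul (1 / (4 * π * s) / (4 * s ^ 2))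
    have hsub := hmul.sub_const (1 / (4 * π * s) * ((if i = j then 1 else 0) / (2 * s)))
    have h2 : (fun w : Fin 2 → ℝ => P2 i j w s)
        = fun w => 1 / (4 * π * s) / (4 * s ^ 2) * (w i * w j)
            - 1 / (4 * π * s) * ((if i = j then 1 else 0) / (2 * s)) := by
      funext w; rw [P2]; ring
    rw [h2]
    refine hsub.congr_fderiv ?_
    ext v
    fin_cases i <;> fin_cases j <;> simp [Lm, smul_eq_mul] <;> try ring
  have := hasF_mulE s hq
  have h2 : (fun k : Fin 2 => ((1 / (4 * π * s) * (((if i = k then x j else 0)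
        + (if j = k then x i else 0)) / (4 * s ^ 2)))
        - P2 i j x s * x k / (2 * s)) * Real.exp (-(nsq x) / (4 * s)))
      = fun k => P3 k i j x s * Real.exp (-(nsq x) / (4 * s)) := by
    funext k; rw [P3]
  rw [← h2]
  exact this

lemma nsq_nonneg (x : Fin 2 → ℝ) : 0 ≤ nsq x := by rw [nsq]; positivity

lemma abs_entry_le (x : Fin 2 → ℝ) (k : Fin 2) : |x k| ≤ Real.sqrt (nsq x) := by
  rw [← Real.sqrt_sq_eq_abs]
  apply Real.sqrt_le_sqrt
  fin_cases k <;> rw [nsq] <;> simp <;> nlinarith [sq_nonneg (x 0), sq_nonneg (x 1)]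

lemma exp_sq_le {u : ℝ} (hu : 0 ≤ u) : u * Real.exp (-u ^ 2) ≤ 1 := by
  have h1 : u ≤ Real.exp (u ^ 2) :=
    le_trans (by nlinarith) (Real.add_one_le_exp (u ^ 2))
  rw [Real.exp_neg]
  calc u * (Real.exp (u ^ 2))⁻¹ ≤ Real.exp (u ^ 2) * (Real.exp (u ^ 2))⁻¹ := by gcongr
    _ = 1 := mul_inv_cancel₀ (Real.exp_pos _).ne'

lemma mul_exp_le {a r : ℝ} (ha : 0 < a) (hr : 0 ≤ r) :
    r * Real.exp (-(a * r ^ 2)) ≤ 1 / Real.sqrt a := by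
  have hsa : 0 < Real.sqrt a := Real.sqrt_pos.2 ha
  rw [le_div_iff₀ hsa]
  calc r * Real.exp (-(a * r ^ 2)) * Real.sqrt a
      = (r * Real.sqrt a) * Real.exp (-(r * Real.sqrt a) ^ 2) := by
        rw [mul_pow, Real.sq_sqrt ha.le]; ring
    _ ≤ 1 := exp_sq_le (by positivity)

/-- `r e^{-r²/(16c)} ≤ 4√c` with `r = √(nsq x)`. -/
lemma re16 {c : ℝ} (hc : 0 < c) (x : Fin 2 → ℝ) :
    Real.sqrt (nsq x) * Real.exp (-(nsq x) / (16 * c)) ≤ 4 * Real.sqrt c := by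
  have hn := nsq_nonneg x
  have h1 : -(nsq x) / (16 * c) = -((16 * c)⁻¹ * Real.sqrt (nsq x) ^ 2) := by
    rw [Real.sq_sqrt hn]; field_simp
  rw [h1]
  refine (mul_exp_le (by positivity) (Real.sqrt_nonneg _)).trans ?_
  rw [Real.sqrt_inv, one_div, inv_inv]
  rw [show (16 : ℝ) * c = 4 ^ 2 * c by ring, Real.sqrt_mul (by positivity), Real.sqrt_sq (by norm_num)]

lemma exp_e4 {c : ℝ} (hc : 0 < c) (x : Fin 2 → ℝ) :
    Real.exp (-(nsq x) / (4 * c)) = Real.exp (-(nsq x) / (16 * c)) ^ 4 := by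
  rw [← Real.exp_nat_mul]
  congr 1
  field_simp
  ring

lemma e16_le_one {c : ℝ} (hc : 0 < c) (x : Fin 2 → ℝ) :
    Real.exp (-(nsq x) / (16 * c)) ≤ 1 := by
  rw [Real.exp_le_one_iff]
  apply div_nonpos_of_nonpos_of_nonneg (neg_nonpos.2 (nsq_nonneg x)) (by positivity)

lemma rpow_n32 {t : ℝ} (ht : 0 < t) : t ^ (-(3 : ℝ) / 2) = Real.sqrt t / t ^ 2 := by
  rw [Real.sqrt_eq_rpow, ← Real.rpow_natCast t 2, ← Real.rpow_sub ht]
  norm_num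

lemma rpow_n52 {s : ℝ} (hs : 0 < s) : s ^ (-(5 : ℝ) / 2) = Real.sqrt s / s ^ 3 := by
  rw [Real.sqrt_eq_rpow, ← Real.rpow_natCast s 3, ← Real.rpow_sub hs]
  norm_num

lemma bP1 {t : ℝ} (ht : 0 < t) (k : Fin 2) (x : Fin 2 → ℝ) :
    |P1 k x t * Real.exp (-(nsq x) / (4 * t))|
      ≤ t ^ (-(3 : ℝ) / 2) * Real.exp (-(nsq x) / (16 * t)) := by
  have hn := nsq_nonneg x
  set r := Real.sqrt (nsq x) with hrdef
  set e := Real.exp (-(nsq x) / (16 * t)) with hedef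
  have he : 0 < e := Real.exp_pos _
  have he1 : e ≤ 1 := e16_le_one ht x
  have hre : r * e ≤ 4 * Real.sqrt t := re16 ht x
  have hr : 0 ≤ r := Real.sqrt_nonneg _
  have hxk : |x k| ≤ r := abs_entry_le x k
  have hE4 : Real.exp (-(nsq x) / (4 * t)) = e ^ 4 := exp_e4 ht x
  have hst : 0 < Real.sqrt t := Real.sqrt_pos.2 ht
  have habs : |P1 k x t| = 1 / (4 * π * t) * |x k| / (2 * t) := by
    rw [P1, abs_div, abs_mul, abs_neg, abs_of_pos (by positivity : (0:ℝ) < 1 / (4 * π * t)),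
      abs_of_pos (by positivity : (0:ℝ) < 2 * t)]
  have key : |x k| * e ^ 4 ≤ 4 * Real.sqrt t * e := by
    calc |x k| * e ^ 4 ≤ r * e ^ 4 := by gcongr
      _ = (r * e) * e ^ 3 := by ring
      _ ≤ (4 * Real.sqrt t) * e ^ 3 := by gcongr
      _ ≤ 4 * Real.sqrt t * e := by
          have h3 : e ^ 3 ≤ e := by nlinarith [he.le, he1, sq_nonneg (1 - e), sq_nonneg e]
          exact mul_le_mul_of_nonneg_left h3 (by positivity)
  have hpi : π ≠ 0 := Real.pi_ne_zero
  have ht' : t ≠ 0 := ht.ne'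
  have h11 : 1 / (2 * π) ≤ 1 := by
    rw [div_le_one (by positivity)]; nlinarith [Real.pi_gt_three]
  rw [abs_mul, habs, abs_of_pos (Real.exp_pos _), hE4, rpow_n32 ht]
  calc 1 / (4 * π * t) * |x k| / (2 * t) * e ^ 4
      = (|x k| * e ^ 4) / (8 * π * t ^ 2) := by field_simp; ring
    _ ≤ (4 * Real.sqrt t * e) / (8 * π * t ^ 2) :=
        (div_le_div_iff_of_pos_right (by positivity)).mpr key
    _ = (Real.sqrt t / t ^ 2 * e) * (1 / (2 * π)) := by field_simp; ring
    _ ≤ (Real.sqrt t / t ^ 2 * e) * 1 := mul_le_mul_of_nonneg_left h11 (by positivity)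
    _ = Real.sqrt t / t ^ 2 * e := by ring

lemma bP3 {s : ℝ} (hs : 0 < s) (k i j : Fin 2) (x : Fin 2 → ℝ) :
    |P3 k i j x s * Real.exp (-(nsq x) / (4 * s))|
      ≤ s ^ (-(5 : ℝ) / 2) * Real.exp (-(nsq x) / (16 * s)) := by
  have hn := nsq_nonneg x
  set r := Real.sqrt (nsq x) with hrdef
  set e := Real.exp (-(nsq x) / (16 * s)) with hedef
  have he : 0 < e := Real.exp_pos _
  have he1 : e ≤ 1 := e16_le_one hs x
  have hre : r * e ≤ 4 * Real.sqrt s := re16 hs x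
  have hr : 0 ≤ r := Real.sqrt_nonneg _
  have hE4 : Real.exp (-(nsq x) / (4 * s)) = e ^ 4 := exp_e4 hs x
  have hst : 0 < Real.sqrt s := Real.sqrt_pos.2 hs
  have hc : (0:ℝ) < 1 / (4 * π * s) := by positivity
  -- |P2| bound
  have hP2 : |P2 i j x s| ≤ 1 / (4 * π * s) * (r ^ 2 / (4 * s ^ 2) + 1 / (2 * s)) := by
    rw [P2, abs_mul, abs_of_pos hc]
    gcongr
    refine (abs_sub _ _).trans ?_
    gcongr
    · rw [abs_div, abs_of_pos (by positivity : (0:ℝ) < 4 * s ^ 2)]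
      gcongr
      calc |x i * x j| = |x i| * |x j| := abs_mul _ _
        _ ≤ r * r := mul_le_mul (abs_entry_le x i) (abs_entry_le x j) (abs_nonneg _) hr
        _ = r ^ 2 := by ring
    · rw [abs_div, abs_of_pos (by positivity : (0:ℝ) < 2 * s)]
      gcongr
      split <;> simp
  -- |P3| bound
  have hP3 : |P3 k i j x s| ≤ 1 / (4 * π * s) * ((2 * r) / (4 * s ^ 2))
      + (1 / (4 * π * s) * (r ^ 2 / (4 * s ^ 2) + 1 / (2 * s))) * r / (2 * s) := by
    rw [P3]
    refine (abs_sub _ _).trans ?_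
    gcongr
    · rw [abs_mul, abs_of_pos hc, abs_div, abs_of_pos (by positivity : (0:ℝ) < 4 * s ^ 2)]
      gcongr
      refine (abs_add_le _ _).trans ?_
      have h1 : |if i = k then x j else 0| ≤ r := by
        split
        · exact abs_entry_le x j
        · simpa using hr
      have h2 : |if j = k then x i else 0| ≤ r := by
        split
        · exact abs_entry_le x i
        · simpa using hr
      linarith
    · rw [abs_div, abs_mul, abs_of_pos (by positivity : (0:ℝ) < 2 * s)]
      refine (div_le_div_iff_of_pos_right (by positivity)).mpr ?_
      exact mul_le_mul hP2 (abs_entry_le x k) (abs_nonneg _) (by positivity)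
  have keyA : r * e ^ 4 ≤ 4 * Real.sqrt s * e := by
    calc r * e ^ 4 = (r * e) * e ^ 3 := by ring
      _ ≤ (4 * Real.sqrt s) * e ^ 3 := by gcongr
      _ ≤ 4 * Real.sqrt s * e := by
          have h3 : e ^ 3 ≤ e := by nlinarith [he.le, he1, sq_nonneg (1 - e), sq_nonneg e]
          exact mul_le_mul_of_nonneg_left h3 (by positivity)
  have keyB : r ^ 3 * e ^ 4 ≤ 64 * s * Real.sqrt s * e := by
    have h3 : (r * e) ^ 3 ≤ (4 * Real.sqrt s) ^ 3 := by gcongr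
    calc r ^ 3 * e ^ 4 = (r * e) ^ 3 * e := by ring
      _ ≤ (4 * Real.sqrt s) ^ 3 * e := by gcongr
      _ = 64 * (Real.sqrt s * Real.sqrt s * Real.sqrt s) * e := by ring
      _ = 64 * s * Real.sqrt s * e := by rw [Real.mul_self_sqrt hs.le]; ring
  have hpi : π ≠ 0 := Real.pi_ne_zero
  have hs' : s ≠ 0 := hs.ne'
  have h11 : 11 / (4 * π) ≤ 1 := by
    rw [div_le_one (by positivity)]; nlinarith [Real.pi_gt_three]
  rw [abs_mul, abs_of_pos (Real.exp_pos _), hE4, rpow_n52 hs]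
  calc |P3 k i j x s| * e ^ 4
      ≤ (1 / (4 * π * s) * ((2 * r) / (4 * s ^ 2))
          + (1 / (4 * π * s) * (r ^ 2 / (4 * s ^ 2) + 1 / (2 * s))) * r / (2 * s)) * e ^ 4 :=
        mul_le_mul_of_nonneg_right hP3 (by positivity)
    _ = 3 * (r * e ^ 4) / (16 * π * s ^ 3) + (r ^ 3 * e ^ 4) / (32 * π * s ^ 4) := by
        field_simp; ring
    _ ≤ 3 * (4 * Real.sqrt s * e) / (16 * π * s ^ 3)
          + (64 * s * Real.sqrt s * e) / (32 * π * s ^ 4) := by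
        gcongr
    _ = (Real.sqrt s / s ^ 3 * e) * (11 / (4 * π)) := by field_simp; ring
    _ ≤ (Real.sqrt s / s ^ 3 * e) * 1 := mul_le_mul_of_nonneg_left h11 (by positivity)
    _ = Real.sqrt s / s ^ 3 * e := by ring

lemma bP2 {s : ℝ} (hs : 0 < s) (i j : Fin 2) (x : Fin 2 → ℝ) :
    |P2 i j x s * Real.exp (-(nsq x) / (4 * s))| ≤ 2 / s ^ 2 := by
  have hn := nsq_nonneg x
  set r := Real.sqrt (nsq x) with hrdef
  set e := Real.exp (-(nsq x) / (16 * s)) with hedef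
  have he : 0 < e := Real.exp_pos _
  have he1 : e ≤ 1 := e16_le_one hs x
  have hre : r * e ≤ 4 * Real.sqrt s := re16 hs x
  have hr : 0 ≤ r := Real.sqrt_nonneg _
  have hE4 : Real.exp (-(nsq x) / (4 * s)) = e ^ 4 := exp_e4 hs x
  have hc : (0:ℝ) < 1 / (4 * π * s) := by positivity
  have hpi : π ≠ 0 := Real.pi_ne_zero
  have hs' : s ≠ 0 := hs.ne'
  have hP2 : |P2 i j x s| ≤ 1 / (4 * π * s) * (r ^ 2 / (4 * s ^ 2) + 1 / (2 * s)) := by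
    rw [P2, abs_mul, abs_of_pos hc]
    gcongr
    refine (abs_sub _ _).trans ?_
    gcongr
    · rw [abs_div, abs_of_pos (by positivity : (0:ℝ) < 4 * s ^ 2)]
      gcongr
      calc |x i * x j| = |x i| * |x j| := abs_mul _ _
        _ ≤ r * r := mul_le_mul (abs_entry_le x i) (abs_entry_le x j) (abs_nonneg _) hr
        _ = r ^ 2 := by ring
    · rw [abs_div, abs_of_pos (by positivity : (0:ℝ) < 2 * s)]
      gcongr
      split <;> simp
  have hr2e : r ^ 2 * e ^ 4 ≤ 16 * s := by
    have h2 : (r * e) ^ 2 ≤ (4 * Real.sqrt s) ^ 2 := by gcongr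
    have h4 : (4 * Real.sqrt s) ^ 2 = 16 * s := by
      rw [mul_pow, Real.sq_sqrt hs.le]; norm_num
    calc r ^ 2 * e ^ 4 = (r * e) ^ 2 * e ^ 2 := by ring
      _ ≤ (r * e) ^ 2 * 1 := by
          have : e ^ 2 ≤ 1 := by nlinarith
          exact mul_le_mul_of_nonneg_left this (by positivity)
      _ = (r * e) ^ 2 := by ring
      _ ≤ (4 * Real.sqrt s) ^ 2 := h2
      _ = 16 * s := h4
  have h9 : 9 / (8 * π) ≤ 2 := by
    rw [div_le_iff₀ (by positivity)]; nlinarith [Real.pi_gt_three]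
  rw [abs_mul, abs_of_pos (Real.exp_pos _), hE4]
  calc |P2 i j x s| * e ^ 4
      ≤ (1 / (4 * π * s) * (r ^ 2 / (4 * s ^ 2) + 1 / (2 * s))) * e ^ 4 :=
        mul_le_mul_of_nonneg_right hP2 (by positivity)
    _ = (r ^ 2 * e ^ 4) / (16 * π * s ^ 3) + e ^ 4 / (8 * π * s ^ 2) := by
        field_simp; ring
    _ ≤ (16 * s) / (16 * π * s ^ 3) + 1 / (8 * π * s ^ 2) := by
        gcongr
        calc e ^ 4 ≤ 1 ^ 4 := by gcongr
          _ = 1 := by norm_num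
    _ = (9 / (8 * π)) / s ^ 2 := by field_simp; ring
    _ ≤ 2 / s ^ 2 := by gcongr

lemma measP2E (i j : Fin 2) (z : Fin 2 → ℝ) :
    Measurable (fun s : ℝ => P2 i j z s * Real.exp (-(nsq z) / (4 * s))) := by
  unfold P2; fun_prop

lemma measP3E (k i j : Fin 2) (z : Fin 2 → ℝ) :
    Measurable (fun s : ℝ => P3 k i j z s * Real.exp (-(nsq z) / (4 * s))) := by
  unfold P3 P2; fun_prop

lemma measLm (i j : Fin 2) (z : Fin 2 → ℝ) :
    Measurable (fun s : ℝ => Lm (fun k => P3 k i j z s * Real.exp (-(nsq z) / (4 * s)))) := by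
  unfold Lm
  exact ((measP3E 0 i j z).smul_const _).add ((measP3E 1 i j z).smul_const _)

lemma int52 {t : ℝ} (ht : 0 < t) (x : Fin 2 → ℝ) :
    IntegrableOn (fun s => s ^ (-(5:ℝ)/2) * Real.exp (-(nsq x) / (16 * s))) (Ioi t) := by
  refine Integrable.mono' (integrableOn_Ioi_rpow_of_lt (a := -(5:ℝ)/2) (by norm_num) ht)
    ((by fun_prop : Measurable fun s : ℝ =>
      s ^ (-(5:ℝ)/2) * Real.exp (-(nsq x) / (16 * s))).aestronglyMeasurable) ?_
  refine (ae_restrict_iff' measurableSet_Ioi).mpr (ae_of_all _ fun s hs => ?_)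
  have hs0 : 0 < s := ht.trans hs
  rw [Real.norm_eq_abs, abs_mul, abs_of_nonneg (Real.rpow_nonneg hs0.le _),
    abs_of_pos (Real.exp_pos _)]
  calc s ^ (-(5:ℝ)/2) * Real.exp (-(nsq x) / (16 * s)) ≤ s ^ (-(5:ℝ)/2) * 1 := by
        have := e16_le_one hs0 x
        have h0 : (0:ℝ) ≤ s ^ (-(5:ℝ)/2) := Real.rpow_nonneg hs0.le _
        nlinarith [Real.exp_pos (-(nsq x) / (16 * s))]
    _ = s ^ (-(5:ℝ)/2) := mul_one _

lemma bound_int {t : ℝ} (ht : 0 < t) :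
    Integrable (fun s => 2 * s ^ (-(5:ℝ)/2)) (volume.restrict (Ioi t)) :=
  (integrableOn_Ioi_rpow_of_lt (by norm_num) ht).const_mul 2

lemma intP2 {t : ℝ} (ht : 0 < t) (i j : Fin 2) (z : Fin 2 → ℝ) :
    Integrable (fun s => P2 i j z s * Real.exp (-(nsq z) / (4 * s)))
      (volume.restrict (Ioi t)) := by
  have hmono : IntegrableOn (fun s : ℝ => 2 / s ^ 2) (Ioi t) := by
    have h : IntegrableOn (fun s : ℝ => 2 * s ^ (-2:ℝ)) (Ioi t) :=
      (integrableOn_Ioi_rpow_of_lt (by norm_num : (-2:ℝ) < -1) ht).const_mul 2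
    refine h.congr_fun (fun s hs => ?_) measurableSet_Ioi
    have hs0 : 0 < s := ht.trans hs
    beta_reduce
    rw [show (-2:ℝ) = -((2:ℕ):ℝ) by norm_num, Real.rpow_neg hs0.le, Real.rpow_natCast]
    ring
  refine hmono.mono' (measP2E i j z).aestronglyMeasurable ?_
  refine (ae_restrict_iff' measurableSet_Ioi).mpr (ae_of_all _ fun s hs => ?_)
  rw [Real.norm_eq_abs]
  exact bP2 (ht.trans hs) i j z

lemma normLm_le {t : ℝ} (ht : 0 < t) (i j : Fin 2) {s : ℝ} (hs : s ∈ Ioi t) (z : Fin 2 → ℝ) :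
    ‖Lm (fun k => P3 k i j z s * Real.exp (-(nsq z) / (4 * s)))‖ ≤ 2 * s ^ (-(5:ℝ)/2) := by
  have hs0 : 0 < s := ht.trans hs
  refine (Lm_norm_le _).trans ?_
  have h0 := bP3 hs0 0 i j z
  have h1 := bP3 hs0 1 i j z
  have he1 : Real.exp (-(nsq z) / (16 * s)) ≤ 1 := e16_le_one hs0 z
  have hrp : 0 ≤ s ^ (-(5:ℝ)/2) := Real.rpow_nonneg hs0.le _
  nlinarith [Real.exp_pos (-(nsq z) / (16 * s))]

lemma intLm {t : ℝ} (ht : 0 < t) (i j : Fin 2) (z : Fin 2 → ℝ) :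
    Integrable (fun s => Lm (fun k => P3 k i j z s * Real.exp (-(nsq z) / (4 * s))))
      (volume.restrict (Ioi t)) := by
  have hm : AEStronglyMeasurable
      (fun s => Lm (fun k => P3 k i j z s * Real.exp (-(nsq z) / (4 * s))))
      (volume.restrict (Ioi t)) := (measLm i j z).aestronglyMeasurable
  refine Integrable.mono' (bound_int ht) hm ?_
  exact (ae_restrict_iff' measurableSet_Ioi).mpr (ae_of_all _ fun s hs => normLm_le ht i j hs z)

lemma hasF_int (i j : Fin 2) (x : Fin 2 → ℝ) {t : ℝ} (ht : 0 < t) :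
    HasFDerivAt (fun z => ∫ s in Ioi t, P2 i j z s * Real.exp (-(nsq z) / (4 * s)))
      (∫ s in Ioi t, Lm (fun k => P3 k i j x s * Real.exp (-(nsq x) / (4 * s)))) x := by
  refine hasFDerivAt_integral_of_dominated_of_fderiv_le (𝕜 := ℝ)
    (F' := fun z s => Lm (fun k => P3 k i j z s * Real.exp (-(nsq z) / (4 * s))))
    (bound := fun s => 2 * s ^ (-(5:ℝ)/2)) (Metric.ball_mem_nhds x one_pos) ?_ ?_ ?_ ?_ ?_ ?_
  · exact Filter.Eventually.of_forall fun z => (measP2E i j z).aestronglyMeasurable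
  · exact intP2 ht i j x
  · exact (measLm i j x).aestronglyMeasurable
  · exact (ae_restrict_iff' measurableSet_Ioi).mpr
      (ae_of_all _ fun s hs z _ => normLm_le ht i j hs z)
  · exact bound_int ht
  · exact (ae_restrict_iff' measurableSet_Ioi).mpr
      (ae_of_all _ fun s hs z _ => hasF_P2E i j s z)

lemma pd_Kent (i j k : Fin 2) (x : Fin 2 → ℝ) {t : ℝ} (ht : 0 < t) :
    |pd k (fun z => Kent i j z t) x|
      ≤ t ^ (-(3:ℝ)/2) * Real.exp (-(nsq x) / (16 * t))
        + ∫ s in Ioi t, s ^ (-(5:ℝ)/2) * Real.exp (-(nsq x) / (16 * s)) := by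
  have hfun : (fun z => Kent i j z t) = fun z =>
      (if i = j then (1:ℝ) else 0) * heatG z t
        + ∫ s in Ioi t, P2 i j z s * Real.exp (-(nsq z) / (4 * s)) := by
    funext z
    rw [Kent]
    congr 1
    simp only [pd2_heatG]
  rw [hfun]
  have hconst : HasFDerivAt (fun z => (if i = j then (1:ℝ) else 0) * heatG z t)
      ((if i = j then (1:ℝ) else 0) • Lm (fun k' => P1 k' x t * Real.exp (-(nsq x) / (4 * t)))) x :=
    (hasF_heatG t x).const_mul _
  have hsum := hconst.fun_add (hasF_int i j x ht)
  rw [pd_eq k hsum]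
  rw [ContinuousLinearMap.add_apply, ContinuousLinearMap.smul_apply, Lm_single,
    ContinuousLinearMap.integral_apply (intLm ht i j x)]
  simp only [Lm_single]
  refine (abs_add_le _ _).trans ?_
  have h1 : |(if i = j then (1:ℝ) else 0) • (P1 k x t * Real.exp (-(nsq x) / (4 * t)))|
      ≤ t ^ (-(3:ℝ)/2) * Real.exp (-(nsq x) / (16 * t)) := by
    rw [smul_eq_mul, abs_mul]
    refine le_trans ?_ (bP1 ht k x)
    have : |if i = j then (1:ℝ) else 0| ≤ 1 := by split <;> simp
    nlinarith [abs_nonneg (P1 k x t * Real.exp (-(nsq x) / (4 * t))), this]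
  have h2 : |∫ s in Ioi t, P3 k i j x s * Real.exp (-(nsq x) / (4 * s))|
      ≤ ∫ s in Ioi t, s ^ (-(5:ℝ)/2) * Real.exp (-(nsq x) / (16 * s)) := by
    have hni := norm_integral_le_integral_norm (μ := volume.restrict (Ioi t))
      (fun s => P3 k i j x s * Real.exp (-(nsq x) / (4 * s)))
    simp only [Real.norm_eq_abs] at hni
    refine hni.trans ?_
    refine integral_mono_of_nonneg (ae_of_all _ fun s => abs_nonneg _) (int52 ht x) ?_
    refine (ae_restrict_iff' measurableSet_Ioi).mpr (ae_of_all _ fun s hs => ?_)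
    exact bP3 (ht.trans hs) k i j x
  linarith

/-- Pointwise bound
`|∇K(x,t)| ≤ C(t^{−3/2} e^{−|x|²/(16t)} + ∫_t^∞ s^{−5/2} e^{−|x|²/(16s)} ds)`. -/
theorem gradK_pointwise_bound :
    ∃ C : ℝ, 0 < C ∧ ∀ x : Fin 2 → ℝ, x ≠ 0 → ∀ t : ℝ, 0 < t →
      gradK x t ≤ C * (t ^ (-(3 : ℝ) / 2) * Real.exp (-(nsq x) / (16 * t))
        + ∫ s in Set.Ioi t, s ^ (-(5 : ℝ) / 2) * Real.exp (-(nsq x) / (16 * s))) := by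
  refine ⟨8, by norm_num, fun x _ t ht => ?_⟩
  rw [gradK]
  calc (∑ i : Fin 2, ∑ j : Fin 2, ∑ k : Fin 2, |pd k (fun z => Kent i j z t) x|)
      ≤ ∑ _i : Fin 2, ∑ _j : Fin 2, ∑ _k : Fin 2,
        (t ^ (-(3 : ℝ) / 2) * Real.exp (-(nsq x) / (16 * t))
          + ∫ s in Set.Ioi t, s ^ (-(5 : ℝ) / 2) * Real.exp (-(nsq x) / (16 * s))) := by
        refine Finset.sum_le_sum fun i _ => Finset.sum_le_sum fun j _ =>
          Finset.sum_le_sum fun k _ => pd_Kent i j k x ht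
    _ = 8 * (t ^ (-(3 : ℝ) / 2) * Real.exp (-(nsq x) / (16 * t))
          + ∫ s in Set.Ioi t, s ^ (-(5 : ℝ) / 2) * Real.exp (-(nsq x) / (16 * s))) := by
        simp [Finset.sum_const, Finset.card_univ]
        ring
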